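/- Fix a real m and work on the open set {λ > 0} in ℝ⁶ with coordinates (x, y, u, p, q, λ). Define D_x = ∂_x + p∂_u + λ∂_p + λ^m∂_q and D_y = ∂_y + q∂_u + λ^m∂_p + (m²/(2m−1))λ^{2m−1}∂_q (assume m ≠ 1/2). Then [D_y, D_x] = 0, and ξ = D_y − m·λ^{m−1}·D_x satisfies [∂_λ, ξ] = −m(m−1)λ^{m−2}·D_x, so ξ is a Cauchy characteristic of the distribution spanned by D_x, D_y, ∂_λ. -/

import Mathlib

/-- Lie bracket of vector fields on ℝⁿ. -/
noncomputable def lie {n : ℕ} (X Y : (Fin n → ℝ) → (Fin n → ℝ)) :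
    (Fin n → ℝ) → (Fin n → ℝ) :=
  fun p => fderiv ℝ Y p (X p) - fderiv ℝ X p (Y p)

/-- Coordinates on ℝ⁶: (x, y, u, p, q, λ) = (P 0, ..., P 5); λ^s is the real power. -/
noncomputable def DxM (m : ℝ) : (Fin 6 → ℝ) → (Fin 6 → ℝ) :=
  fun P => ![1, 0, P 3, P 5, (P 5) ^ m, 0]

noncomputable def DyM (m : ℝ) : (Fin 6 → ℝ) → (Fin 6 → ℝ) :=
  fun P => ![0, 1, P 4, (P 5) ^ m, (m ^ 2 / (2 * m - 1)) * (P 5) ^ (2 * m - 1), 0]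

noncomputable def xiM (m : ℝ) : (Fin 6 → ℝ) → (Fin 6 → ℝ) :=
  fun P => DyM m P - (m * (P 5) ^ (m - 1)) • DxM m P

noncomputable def dLam : (Fin 6 → ℝ) → (Fin 6 → ℝ) :=
  fun _ => ![0, 0, 0, 0, 0, 1]


lemma vec6_zero {α : Type*} (a b c d e f : α) : ![a, b, c, d, e, f] 0 = a := rfl
lemma vec6_one {α : Type*} (a b c d e f : α) : ![a, b, c, d, e, f] 1 = b := rfl
lemma vec6_two {α : Type*} (a b c d e f : α) : ![a, b, c, d, e, f] 2 = c := rfl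
lemma vec6_three {α : Type*} (a b c d e f : α) : ![a, b, c, d, e, f] 3 = d := rfl
lemma vec6_four {α : Type*} (a b c d e f : α) : ![a, b, c, d, e, f] 4 = e := rfl
lemma vec6_five {α : Type*} (a b c d e f : α) : ![a, b, c, d, e, f] 5 = f := rfl

noncomputable def pr (i : Fin 6) : (Fin 6 → ℝ) →L[ℝ] ℝ :=
  ContinuousLinearMap.proj i

lemma hpow_aux {P : Fin 6 → ℝ} (hlam : 0 < P 5) (s : ℝ) :
    HasFDerivAt (fun Q : Fin 6 → ℝ => (Q 5) ^ s) ((s * (P 5) ^ (s - 1)) • pr 5) P :=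
  (Real.hasDerivAt_rpow_const (p := s) (Or.inl hlam.ne')).comp_hasFDerivAt (f := fun Q : Fin 6 → ℝ => Q 5) P
    (hasFDerivAt_apply 5 P)

lemma hDx_aux (m : ℝ) {P : Fin 6 → ℝ} (hlam : 0 < P 5) :
    HasFDerivAt (DxM m)
      (ContinuousLinearMap.pi ![0, 0, pr 3, pr 5, (m * (P 5) ^ (m - 1)) • pr 5, 0]) P := by
  apply hasFDerivAt_pi''
  intro i
  rw [ContinuousLinearMap.proj_pi]
  fin_cases i <;> simp [DxM] <;>
    first
      | exact hasFDerivAt_const _ _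
      | exact hasFDerivAt_apply _ _
      | exact hpow_aux hlam m

lemma hDy_aux (m : ℝ) {P : Fin 6 → ℝ} (hlam : 0 < P 5) :
    HasFDerivAt (DyM m)
      (ContinuousLinearMap.pi ![0, 0, pr 4, (m * (P 5) ^ (m - 1)) • pr 5,
        (m ^ 2 / (2 * m - 1)) • ((2 * m - 1) * (P 5) ^ (2 * m - 1 - 1)) • pr 5, 0]) P := by
  apply hasFDerivAt_pi''
  intro i
  rw [ContinuousLinearMap.proj_pi]
  fin_cases i <;> simp [DyM] <;>
    first
      | exact hasFDerivAt_const _ _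
      | exact hasFDerivAt_apply _ _
      | exact hpow_aux hlam m
      | exact (hpow_aux hlam (2 * m - 1)).const_mul _

lemma hc_aux (m : ℝ) {P : Fin 6 → ℝ} (hlam : 0 < P 5) :
    HasFDerivAt (fun Q : Fin 6 → ℝ => m * (Q 5) ^ (m - 1))
      ((m : ℝ) • ((m - 1) * (P 5) ^ (m - 1 - 1)) • pr 5) P :=
  (hpow_aux hlam (m - 1)).const_mul m

lemma hXi_aux (m : ℝ) {P : Fin 6 → ℝ} (hlam : 0 < P 5) :
    HasFDerivAt (xiM m)
      ((ContinuousLinearMap.pi ![0, 0, pr 4, (m * (P 5) ^ (m - 1)) • pr 5,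
          (m ^ 2 / (2 * m - 1)) • ((2 * m - 1) * (P 5) ^ (2 * m - 1 - 1)) • pr 5, 0]) -
        ((m * (P 5) ^ (m - 1)) •
            (ContinuousLinearMap.pi ![0, 0, pr 3, pr 5, (m * (P 5) ^ (m - 1)) • pr 5, 0]) +
          ((m : ℝ) • ((m - 1) * (P 5) ^ (m - 1 - 1)) • pr 5).smulRight (DxM m P))) P := by
  unfold xiM
  exact (hDy_aux m hlam).sub ((hc_aux m hlam).smul (hDx_aux m hlam))

set_option maxHeartbeats 1600000 in
/-- On the set {λ > 0} in ℝ⁶, for D_x = ∂_x + p∂_u + λ∂_p + λ^m∂_q and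
D_y = ∂_y + q∂_u + λ^m∂_p + (m²/(2m−1))λ^{2m−1}∂_q (m ≠ 1/2) one has
[D_y, D_x] = 0 and [∂_λ, ξ] = −m(m−1)λ^{m−2}·D_x for ξ = D_y − mλ^{m−1}·D_x,
so ξ is a Cauchy characteristic of the distribution spanned by D_x, D_y, ∂_λ. -/
theorem cauchy_characteristic_submaximal_model (m : ℝ) (hm : m ≠ 1 / 2) :
    ∀ P : Fin 6 → ℝ, P 5 > 0 →
      lie (DyM m) (DxM m) P = 0 ∧
      lie dLam (xiM m) P = (-(m * (m - 1) * (P 5) ^ (m - 2))) • DxM m P ∧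
      (∀ Z ∈ ({DxM m, DyM m, dLam} : Set ((Fin 6 → ℝ) → (Fin 6 → ℝ))),
        lie (xiM m) Z P ∈ Submodule.span ℝ {DxM m P, DyM m P, dLam P}) := by
  intro P hlam
  have h2m : 2 * m - 1 ≠ 0 := by
    intro h; apply hm; linarith
  have hdL : fderiv ℝ dLam P = 0 := by
    unfold dLam; exact fderiv_const_apply _
  have hm12 : (m - 1 - 1 : ℝ) = m - 2 := by ring
  have hE : (P 5) ^ (m - 1) * (P 5) ^ (m - 1) = (P 5) ^ (2 * m - 1 - 1) := by
    rw [show (2 * m - 1 - 1 : ℝ) = (m - 1) + (m - 1) by ring, Real.rpow_add hlam]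
  refine ⟨?_, ?_, ?_⟩
  · simp only [lie, (hDx_aux m hlam).fderiv, (hDy_aux m hlam).fderiv]
    funext i
    fin_cases i <;>
      simp [DxM, DyM, pr, ContinuousLinearMap.pi_apply, vec6_zero, vec6_one, vec6_two, vec6_three, vec6_four, vec6_five, Matrix.vecHead, Matrix.vecTail] <;> ring
  · simp only [lie, (hXi_aux m hlam).fderiv, hdL]
    funext i
    fin_cases i <;>
      simp [DxM, DyM, dLam, pr, ContinuousLinearMap.pi_apply, vec6_zero, vec6_one, vec6_two, vec6_three, vec6_four, vec6_five, Matrix.vecHead, Matrix.vecTail, hm12] <;>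
      first
        | ring1
        | (rw [← hE]; simp only [Real.rpow_sub hlam, Real.rpow_one, Real.rpow_two, ← mul_assoc, div_mul_cancel₀ _ h2m]; field_simp; ring1)
        | exact Or.inl (by ring)
  · intro Z hZ
    simp only [Set.mem_insert_iff, Set.mem_singleton_iff] at hZ
    rcases hZ with rfl | rfl | rfl
    · have : lie (xiM m) (DxM m) P = 0 := by
        simp only [lie, (hXi_aux m hlam).fderiv, (hDx_aux m hlam).fderiv]
        funext i
        fin_cases i <;>
          simp [DxM, DyM, xiM, pr, ContinuousLinearMap.pi_apply, vec6_zero, vec6_one, vec6_two, vec6_three, vec6_four, vec6_five, Matrix.vecHead, Matrix.vecTail] <;> ring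
      rw [this]; exact Submodule.zero_mem _
    · have : lie (xiM m) (DyM m) P = 0 := by
        simp only [lie, (hXi_aux m hlam).fderiv, (hDy_aux m hlam).fderiv]
        funext i
        fin_cases i <;>
          simp [DxM, DyM, xiM, pr, ContinuousLinearMap.pi_apply, vec6_zero, vec6_one, vec6_two, vec6_three, vec6_four, vec6_five, Matrix.vecHead, Matrix.vecTail] <;> ring
      rw [this]; exact Submodule.zero_mem _
    · have : lie (xiM m) dLam P = (m * (m - 1) * (P 5) ^ (m - 2)) • DxM m P := by
        simp only [lie, (hXi_aux m hlam).fderiv, hdL]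
        funext i
        fin_cases i <;>
          simp [DxM, DyM, dLam, pr, ContinuousLinearMap.pi_apply, vec6_zero, vec6_one, vec6_two, vec6_three, vec6_four, vec6_five, Matrix.vecHead, Matrix.vecTail, hm12] <;>
          first
            | ring1
            | (rw [← hE]; simp only [Real.rpow_sub hlam, Real.rpow_one, Real.rpow_two, ← mul_assoc, div_mul_cancel₀ _ h2m]; field_simp; ring1)
            | exact Or.inl (by ring)
      rw [this]
      exact Submodule.smul_mem _ _ (Submodule.subset_span (by simp))
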